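/- Fix an integer k ≥ 1 and let φ_k^min = arccos(1 − (2 − 2cos(π/(2k+1)))/(1 − cos(π/(2k−1)))). Then for every λ ∈ Λ_k = [sin²(π/(4k+2)), sin²(π/(4k−2))) and every φ ∈ (0, φ_k^min], one has P_k^φ(λ) ≤ P_k^{φ_k^min}(λ). -/

import Mathlib

open Real Set

/-- The success probability `P_k^φ(λ)` of the matched-phase Grover algorithm after
`k` iterations: `P_k^φ(λ) = A·cos((2k+1)δ) + B` where `θ = arcsin √λ`,
`δ = arccos (1 − λ(1 − cos φ))`, `A = (sin²θ/sin²δ)(cos φ − cos δ)` and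
`B = (sin²θ/sin²δ)(1 − cos φ·cos δ)`. -/
noncomputable def grovP (k : ℕ) (φ lam : ℝ) : ℝ :=
  let θ : ℝ := Real.arcsin (Real.sqrt lam)
  let δ : ℝ := Real.arccos (1 - lam * (1 - Real.cos φ))
  let A : ℝ := Real.sin θ ^ 2 / Real.sin δ ^ 2 * (Real.cos φ - Real.cos δ)
  let B : ℝ := Real.sin θ ^ 2 / Real.sin δ ^ 2 * (1 - Real.cos φ * Real.cos δ)
  A * Real.cos ((2 * (k : ℝ) + 1) * δ) + B

/-- `φ_k^min = arccos(1 − (2 − 2cos(π/(2k+1)))/(1 − cos(π/(2k−1))))`. -/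
noncomputable def phiMin (k : ℕ) : ℝ :=
  Real.arccos (1 - (2 - 2 * Real.cos (Real.pi / (2 * (k : ℝ) + 1))) /
    (1 - Real.cos (Real.pi / (2 * (k : ℝ) - 1))))

/-- The reduced form of the success probability, as a function of `δ`. -/
noncomputable def grovG (lam m δ : ℝ) : ℝ :=
  ((lam - 1) * Real.cos (m * δ) + lam + Real.cos δ) / (1 + Real.cos δ)

lemma arccos_le_arccos' {x y : ℝ} (h : x ≤ y) : Real.arccos y ≤ Real.arccos x := by
  unfold Real.arccos; linarith [Real.monotone_arcsin h]

lemma cos_lt_one' {x : ℝ} (h0 : 0 < x) (hπ : x ≤ Real.pi) : Real.cos x < 1 := by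
  have := Real.cos_lt_cos_of_nonneg_of_le_pi (le_refl 0) hπ h0
  simpa using this

/-- Key rewriting: `grovP` equals `grovG` at `δ = arccos (1 - lam*(1-cos φ))`. -/
lemma grovP_eq_grovG (k : ℕ) (φ lam : ℝ) (hl0 : 0 < lam) (hl1 : lam < 1)
    (hc : Real.cos φ < 1) :
    grovP k φ lam = grovG lam (2 * (k : ℝ) + 1) (Real.arccos (1 - lam * (1 - Real.cos φ))) := by
  have hc' : -1 ≤ Real.cos φ := Real.neg_one_le_cos φ
  set c := Real.cos φ with hcdef
  have hx0 : 0 < lam * (1 - c) := by nlinarith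
  have hx2 : lam * (1 - c) < 2 := by nlinarith
  set δ := Real.arccos (1 - lam * (1 - c)) with hδ
  have hcosδ : Real.cos δ = 1 - lam * (1 - c) :=
    Real.cos_arccos (by linarith) (by linarith)
  have hsinθ : Real.sin (Real.arcsin (Real.sqrt lam)) ^ 2 = lam := by
    rw [Real.sin_arcsin (by linarith [Real.sqrt_nonneg lam]) (Real.sqrt_le_one.mpr hl1.le)]
    exact Real.sq_sqrt hl0.le
  have hsinδ : Real.sin δ ^ 2 = (lam * (1 - c)) * (2 - lam * (1 - c)) := by
    rw [Real.sin_sq, hcosδ]; ring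
  have hx2' : (2 : ℝ) - lam * (1 - c) ≠ 0 := by linarith
  have hden : 1 + Real.cos δ ≠ 0 := by rw [hcosδ]; intro h; apply hx2'; linarith
  show Real.sin (Real.arcsin (Real.sqrt lam)) ^ 2 / Real.sin δ ^ 2 * (c - Real.cos δ) *
      Real.cos ((2 * (k : ℝ) + 1) * δ) +
      Real.sin (Real.arcsin (Real.sqrt lam)) ^ 2 / Real.sin δ ^ 2 * (1 - c * Real.cos δ) =
      grovG lam (2 * (k : ℝ) + 1) δ
  rw [hsinθ, grovG, hsinδ, hcosδ]
  have hlam0 : lam ≠ 0 := hl0.ne'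
  have h1c : (1:ℝ) - c ≠ 0 := by linarith
  have hden' : 1 + (1 - lam * (1 - c)) ≠ 0 := by intro h; apply hx2'; linarith
  field_simp
  ring

/-- The trigonometric inequality giving nonnegativity of the derivative's numerator. -/
lemma key_trig_ineq {m δ : ℝ} (hm : 1 ≤ m) (hδ0 : 0 ≤ δ) (hδ1 : m * δ ≤ Real.pi) :
    0 ≤ m * Real.sin (m * δ) * (1 + Real.cos δ) -
      Real.sin δ * (1 + Real.cos (m * δ)) := by
  have hmδ : 0 ≤ m * δ := by positivity
  set a := δ / 2 with ha
  set b := m * δ / 2 with hb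
  have hab : a ≤ b := by
    have : δ ≤ m * δ := le_mul_of_one_le_left hδ0 hm
    simp only [ha, hb]; linarith
  have ha0 : 0 ≤ a := by positivity
  have hb2 : b ≤ Real.pi / 2 := by simp only [hb]; linarith
  have hcosa : 0 ≤ Real.cos a := Real.cos_nonneg_of_mem_Icc ⟨by linarith, by linarith⟩
  have hcosb : 0 ≤ Real.cos b := Real.cos_nonneg_of_mem_Icc ⟨by linarith, by linarith⟩
  have hsinb : 0 ≤ Real.sin b := Real.sin_nonneg_of_nonneg_of_le_pi (by linarith) (by linarith)
  have e1 : Real.sin δ = 2 * Real.sin a * Real.cos a := by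
    rw [ha, ← Real.sin_two_mul]; ring_nf
  have e2 : Real.sin (m * δ) = 2 * Real.sin b * Real.cos b := by
    rw [hb, ← Real.sin_two_mul]; ring_nf
  have e3 : 1 + Real.cos δ = 2 * Real.cos a ^ 2 := by
    have := Real.cos_sq a; rw [ha] at this ⊢; rw [show 2 * (δ/2) = δ by ring] at this; linarith
  have e4 : 1 + Real.cos (m * δ) = 2 * Real.cos b ^ 2 := by
    have := Real.cos_sq b; rw [hb] at this ⊢; rw [show 2 * (m*δ/2) = m*δ by ring] at this
    linarith
  rw [e1, e2, e3, e4]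
  have key : Real.sin a * Real.cos b ≤ m * (Real.sin b * Real.cos a) := by
    have h1 : 0 ≤ Real.sin (b - a) :=
      Real.sin_nonneg_of_nonneg_of_le_pi (by linarith) (by linarith [Real.pi_pos])
    rw [Real.sin_sub] at h1
    nlinarith [mul_nonneg hsinb hcosa]
  nlinarith [mul_nonneg hcosa hcosb]

/-- `grovG lam m` is monotone on `[0, π/m]` for `lam < 1`, `m ≥ 2`. -/
lemma grovG_monotoneOn {lam m : ℝ} (hl1 : lam < 1) (hm : 2 ≤ m) :
    MonotoneOn (grovG lam m) (Icc 0 (Real.pi / m)) := by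
  have hm0 : 0 < m := by linarith
  have hπm : Real.pi / m ≤ Real.pi / 2 :=
    div_le_div_of_nonneg_left Real.pi_pos.le (by norm_num) hm
  have hden : ∀ x ∈ Icc (0:ℝ) (Real.pi / m), (0:ℝ) < 1 + Real.cos x := by
    intro x hx
    have : 0 ≤ Real.cos x :=
      Real.cos_nonneg_of_mem_Icc ⟨by linarith [hx.1, Real.pi_pos], hx.2.trans hπm⟩
    linarith
  have hderiv : ∀ x : ℝ, x ∈ Icc (0:ℝ) (Real.pi / m) →
      HasDerivAt (grovG lam m)
        ((((lam - 1) * (-Real.sin (m * x) * m) + -Real.sin x) * (1 + Real.cos x) -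
          ((lam - 1) * Real.cos (m * x) + lam + Real.cos x) * (-Real.sin x)) /
          (1 + Real.cos x) ^ 2) x := by
    intro x hx
    have hn : HasDerivAt (fun δ => (lam - 1) * Real.cos (m * δ) + lam + Real.cos δ)
        ((lam - 1) * (-Real.sin (m * x) * m) + -Real.sin x) x := by
      have h1 : HasDerivAt (fun δ : ℝ => m * δ) m x := by
        simpa using (hasDerivAt_id x).const_mul m
      have h2 : HasDerivAt (fun δ => Real.cos (m * δ)) (-Real.sin (m * x) * m) x :=
        (Real.hasDerivAt_cos (m * x)).comp x h1
      exact ((h2.const_mul (lam - 1)).add_const lam).add (Real.hasDerivAt_cos x)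
    have hd : HasDerivAt (fun δ => 1 + Real.cos δ) (-Real.sin x) x := by
      simpa using (Real.hasDerivAt_cos x).const_add 1
    exact hn.div hd (hden x hx).ne'
  apply monotoneOn_of_deriv_nonneg (convex_Icc _ _)
  · intro x hx
    exact (hderiv x hx).continuousAt.continuousWithinAt
  · intro x hx
    rw [interior_Icc] at hx
    exact (hderiv x (Ioo_subset_Icc_self hx)).differentiableAt.differentiableWithinAt
  · intro x hx
    rw [interior_Icc] at hx
    rw [(hderiv x (Ioo_subset_Icc_self hx)).deriv]
    apply div_nonneg _ (sq_nonneg _)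
    have hE := key_trig_ineq (by linarith : (1:ℝ) ≤ m) hx.1.le
      (by rw [← le_div_iff₀' hm0]; exact hx.2.le)
    nlinarith [hE]

theorem small_phases_dominated_by_phiMin
    (k : ℕ) (hk : 1 ≤ k) (lam : ℝ)
    (hlam : lam ∈ Set.Ico (Real.sin (Real.pi / (4 * (k : ℝ) + 2)) ^ 2)
      (Real.sin (Real.pi / (4 * (k : ℝ) - 2)) ^ 2))
    (φ : ℝ) (hφ : φ ∈ Set.Ioc (0 : ℝ) (phiMin k)) :
    grovP k φ lam ≤ grovP k (phiMin k) lam := by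
  have hk1 : (1:ℝ) ≤ (k:ℝ) := by exact_mod_cast hk
  set m : ℝ := 2 * (k:ℝ) + 1 with hmdef
  have hm3 : (3:ℝ) ≤ m := by simp only [hmdef]; linarith
  -- basic positivity
  have hπ := Real.pi_pos
  -- lam bounds
  have hl0 : 0 < lam := by
    have h1 : 0 < Real.sin (Real.pi / (4 * (k:ℝ) + 2)) := by
      apply Real.sin_pos_of_pos_of_lt_pi
      · positivity
      · rw [div_lt_iff₀ (by linarith)]; nlinarith
    exact lt_of_lt_of_le (by positivity) hlam.1
  -- half-angle for the right endpoint
  have h2k1 : (0:ℝ) < 2 * (k:ℝ) - 1 := by linarith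
  have hhalf : Real.sin (Real.pi / (4 * (k:ℝ) - 2)) ^ 2 =
      (1 - Real.cos (Real.pi / (2 * (k:ℝ) - 1))) / 2 := by
    have h42 : (4 * (k:ℝ) - 2) ≠ 0 := by intro h; nlinarith
    have h21 : (2 * (k:ℝ) - 1) ≠ 0 := h2k1.ne'
    have h := Real.sin_sq_eq_half_sub (Real.pi / (4 * (k:ℝ) - 2))
    rw [h, show 2 * (Real.pi / (4 * (k:ℝ) - 2)) = Real.pi / (2 * (k:ℝ) - 1) by
      field_simp; ring]
    ring
  have hlam2 : lam < (1 - Real.cos (Real.pi / (2 * (k:ℝ) - 1))) / 2 := by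
    rw [← hhalf]; exact hlam.2
  have hl1 : lam < 1 := by
    have := Real.neg_one_le_cos (Real.pi / (2 * (k:ℝ) - 1)); linarith
  -- properties of phiMin
  have hq : (0:ℝ) < 1 - Real.cos (Real.pi / (2 * (k:ℝ) - 1)) := by
    have : Real.cos (Real.pi / (2 * (k:ℝ) - 1)) < 1 := by
      apply cos_lt_one' (by positivity)
      rw [div_le_iff₀ h2k1]; nlinarith
    linarith
  set r : ℝ := (2 - 2 * Real.cos (Real.pi / m)) / (1 - Real.cos (Real.pi / (2 * (k:ℝ) - 1)))
    with hrdef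
  have hr0 : 0 < r := by
    apply div_pos _ hq
    have : Real.cos (Real.pi / m) < 1 := by
      apply cos_lt_one' (by positivity)
      rw [div_le_iff₀ (by linarith : (0:ℝ) < m)]; nlinarith
    linarith
  have hr2 : r ≤ 2 := by
    rw [hrdef, div_le_iff₀ hq]
    have : Real.cos (Real.pi / (2 * (k:ℝ) - 1)) ≤ Real.cos (Real.pi / m) := by
      apply Real.cos_le_cos_of_nonneg_of_le_pi
      · positivity
      · rw [div_le_iff₀ h2k1]; nlinarith
      · apply div_le_div_of_nonneg_left hπ.le h2k1; simp only [hmdef]; linarith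
    linarith
  have hphimin_eq : phiMin k = Real.arccos (1 - r) := by rw [phiMin, hrdef, hmdef]
  have hcosphimin : Real.cos (phiMin k) = 1 - r := by
    rw [hphimin_eq]; exact Real.cos_arccos (by linarith) (by linarith)
  have hcosphimin_lt : Real.cos (phiMin k) < 1 := by rw [hcosphimin]; linarith
  -- cos φ < 1
  have hφ0 : 0 < φ := hφ.1
  have hφmin : φ ≤ phiMin k := hφ.2
  have hphiminπ : phiMin k ≤ Real.pi := by rw [hphimin_eq]; exact Real.arccos_le_pi _
  have hcosφ : Real.cos (phiMin k) ≤ Real.cos φ := by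
    apply Real.cos_le_cos_of_nonneg_of_le_pi hφ0.le hphiminπ hφmin
  have hcosφ1 : Real.cos φ < 1 := by
    rcases lt_or_eq_of_le hφmin with h | h
    · exact cos_lt_one' hφ0 (by linarith)
    · rw [h]; exact hcosphimin_lt
  -- the two δ's
  set δ1 : ℝ := Real.arccos (1 - lam * (1 - Real.cos φ)) with hδ1
  set δ2 : ℝ := Real.arccos (1 - lam * (1 - Real.cos (phiMin k))) with hδ2
  have hδ1δ2 : δ1 ≤ δ2 := by
    apply arccos_le_arccos'
    nlinarith
  -- δ2 ≤ π / m
  have hδ2π : δ2 ≤ Real.pi / m := by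
    have hlr : lam * r ≤ 1 - Real.cos (Real.pi / m) := by
      have : lam * r < ((1 - Real.cos (Real.pi / (2 * (k:ℝ) - 1))) / 2) * r :=
        (mul_lt_mul_of_pos_right hlam2 hr0)
      have heq : ((1 - Real.cos (Real.pi / (2 * (k:ℝ) - 1))) / 2) * r =
          1 - Real.cos (Real.pi / m) := by
        rw [hrdef]; field_simp
      linarith
    have : Real.cos (Real.pi / m) ≤ 1 - lam * (1 - Real.cos (phiMin k)) := by
      rw [hcosphimin]; linarith
    calc δ2 ≤ Real.arccos (Real.cos (Real.pi / m)) := arccos_le_arccos' this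
      _ = Real.pi / m := Real.arccos_cos (by positivity) (by
          rw [div_le_iff₀ (by linarith : (0:ℝ) < m)]; nlinarith)
  -- δ's in the interval
  have hδ1mem : δ1 ∈ Icc (0:ℝ) (Real.pi / m) :=
    ⟨Real.arccos_nonneg _, hδ1δ2.trans hδ2π⟩
  have hδ2mem : δ2 ∈ Icc (0:ℝ) (Real.pi / m) := ⟨Real.arccos_nonneg _, hδ2π⟩
  -- conclude
  rw [grovP_eq_grovG k φ lam hl0 hl1 hcosφ1,
    grovP_eq_grovG k (phiMin k) lam hl0 hl1 hcosphimin_lt]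
  have := grovG_monotoneOn (m := m) hl1 (by linarith) hδ1mem hδ2mem hδ1δ2
  simpa [hmdef, hδ1, hδ2] using this
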